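/- Let d ≥ 2 be an integer and let ε : ℕ → ℝ satisfy ε_0 = 0, Σ_{i≥1} d^{-i/2}·|ε_i| < ∞, and Σ_{i≥1} d^{-i/2}·(d·|ε_{i-1}| + (d+1)·|ε_i| + |ε_{i+1}|) < ∞. Then, with the convention sgn(0) = 0, Σ_{i≥1} d^{-i/2}·sgn(ε_i)·(d·ε_{i-1} − (d+1)·ε_i + ε_{i+1}) ≤ −(√d − 1)²·Σ_{i≥1} d^{-i/2}·|ε_i|. -/

import Mathlib

lemma sign_mul_self_eq_abs (x : ℝ) : Real.sign x * x = |x| := by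
  rcases lt_trichotomy x 0 with h | rfl | h
  · rw [Real.sign_of_neg h, abs_of_neg h]; ring
  · simp
  · rw [Real.sign_of_pos h, abs_of_pos h]; ring

lemma abs_sign_le_one (x : ℝ) : |Real.sign x| ≤ 1 := by
  rcases Real.sign_apply_eq x with h | h | h <;> rw [h] <;> norm_num

lemma sign_mul_le_abs (x y : ℝ) : Real.sign x * y ≤ |y| := by
  calc Real.sign x * y ≤ |Real.sign x * y| := le_abs_self _
    _ = |Real.sign x| * |y| := abs_mul _ _
    _ ≤ 1 * |y| := mul_le_mul_of_nonneg_right (abs_sign_le_one x) (abs_nonneg y)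
    _ = |y| := one_mul _

/-- The key dissipativity estimate: if `ε_0 = 0`, `Σ_{i≥1} d^{-i/2}|ε_i| < ∞`, and the
dominating series converges, then (with `sgn 0 = 0`)
`Σ_{i≥1} d^{-i/2}·sgn(ε_i)·(d ε_{i-1} − (d+1) ε_i + ε_{i+1}) ≤ −(√d−1)²·Σ_{i≥1} d^{-i/2}|ε_i|`. -/
theorem dissipativity_estimate (d : ℕ) (hd : 2 ≤ d) (ε : ℕ → ℝ) (h0 : ε 0 = 0)
    (h1 : Summable (fun i : ℕ => (Real.sqrt d ^ (i + 1))⁻¹ * |ε (i + 1)|))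
    (h2 : Summable (fun i : ℕ => (Real.sqrt d ^ (i + 1))⁻¹ *
      ((d : ℝ) * |ε i| + ((d : ℝ) + 1) * |ε (i + 1)| + |ε (i + 2)|))) :
    (∑' i : ℕ, (Real.sqrt d ^ (i + 1))⁻¹ * Real.sign (ε (i + 1)) *
        ((d : ℝ) * ε i - ((d : ℝ) + 1) * ε (i + 1) + ε (i + 2))) ≤
      -(Real.sqrt d - 1) ^ 2 *
        ∑' i : ℕ, (Real.sqrt d ^ (i + 1))⁻¹ * |ε (i + 1)| := by
  set r : ℝ := Real.sqrt d with hrdef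
  have hd0 : (0:ℝ) ≤ d := by positivity
  have hrr : r * r = (d : ℝ) := Real.mul_self_sqrt hd0
  have hr0 : 0 < r := Real.sqrt_pos.mpr (by norm_num; omega)
  have hrpow : ∀ i : ℕ, (0:ℝ) < (r ^ (i+1))⁻¹ := fun i => by positivity
  set a : ℕ → ℝ := fun i => (r ^ (i + 1))⁻¹ * |ε (i + 1)| with ha
  set f : ℕ → ℝ := fun i => (r ^ (i + 1))⁻¹ * Real.sign (ε (i + 1)) *
      ((d : ℝ) * ε i - ((d : ℝ) + 1) * ε (i + 1) + ε (i + 2)) with hf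
  set u : ℕ → ℝ := fun i => (r ^ (i + 1))⁻¹ * ((d : ℝ) * |ε i|) with hu
  set w : ℕ → ℝ := fun i => (r ^ (i + 1))⁻¹ * |ε (i + 2)| with hw
  set g : ℕ → ℝ := fun i => u i - ((d : ℝ) + 1) * a i + w i with hg
  have ha_nonneg : ∀ i, 0 ≤ a i := fun i => by positivity
  -- shifts
  have hu_shift : ∀ i : ℕ, u (i + 1) = r * a i := by
    intro i
    have hne : (r : ℝ) ≠ 0 := ne_of_gt hr0
    simp only [hu, ha]
    rw [← hrr]
    rw [pow_succ]
    field_simp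
  have hw_eq : ∀ i : ℕ, w i = r * a (i + 1) := by
    intro i
    simp only [hw, ha]
    rw [pow_succ]
    field_simp
    ring
  -- summability
  have hu_sum : Summable u := by
    rw [← summable_nat_add_iff 1]
    simpa only [hu_shift] using h1.mul_left r
  have hw_sum : Summable w := by
    have hwe : w = fun i => r * a (i + 1) := funext hw_eq
    rw [hwe]
    exact ((summable_nat_add_iff 1).mpr h1).mul_left r
  have ha_sum : Summable a := h1
  have hg_sum : Summable g := ((hu_sum.sub (ha_sum.mul_left _)).add hw_sum)
  have hf_sum : Summable f := by
    apply Summable.of_norm_bounded h2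
    intro i
    simp only [hf, Real.norm_eq_abs, abs_mul, mul_assoc]
    have h1' : |(r ^ (i+1))⁻¹| = (r ^ (i+1))⁻¹ := abs_of_pos (hrpow i)
    rw [h1']
    gcongr
    calc |Real.sign (ε (i+1))| * |(d : ℝ) * ε i - ((d : ℝ) + 1) * ε (i + 1) + ε (i + 2)|
        ≤ 1 * |(d : ℝ) * ε i - ((d : ℝ) + 1) * ε (i + 1) + ε (i + 2)| :=
          mul_le_mul_of_nonneg_right (abs_sign_le_one _) (abs_nonneg _)
      _ = |(d : ℝ) * ε i - ((d : ℝ) + 1) * ε (i + 1) + ε (i + 2)| := one_mul _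
      _ ≤ |(d : ℝ) * ε i| + |((d : ℝ) + 1) * ε (i + 1)| + |ε (i + 2)| := by
          exact (abs_add_le _ _).trans (by gcongr; exact abs_sub _ _)
      _ = (d : ℝ) * |ε i| + ((d : ℝ) + 1) * |ε (i + 1)| + |ε (i + 2)| := by
          rw [abs_mul, abs_mul, abs_of_nonneg hd0, abs_of_nonneg (by linarith : (0:ℝ) ≤ (d:ℝ)+1)]
  -- pointwise bound f ≤ g
  have hfg : ∀ i, f i ≤ g i := by
    intro i
    simp only [hf, hg, hu, hw, ha, mul_assoc]
    have erhs : (r ^ (i + 1))⁻¹ * ((d:ℝ) * |ε i|) - ((d:ℝ) + 1) * ((r ^ (i + 1))⁻¹ * |ε (i + 1)|)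
        + (r ^ (i + 1))⁻¹ * |ε (i + 2)|
        = (r ^ (i + 1))⁻¹ * ((d:ℝ) * |ε i| - ((d:ℝ) + 1) * |ε (i + 1)| + |ε (i + 2)|) := by ring
    rw [erhs]
    apply mul_le_mul_of_nonneg_left _ (le_of_lt (hrpow i))
    have e1 : Real.sign (ε (i+1)) * ((d : ℝ) * ε i - ((d : ℝ) + 1) * ε (i + 1) + ε (i + 2))
        = (d:ℝ) * (Real.sign (ε (i+1)) * ε i) - ((d:ℝ)+1) * (Real.sign (ε (i+1)) * ε (i+1))
          + Real.sign (ε (i+1)) * ε (i+2) := by ring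
    rw [e1, sign_mul_self_eq_abs]
    have b1 := sign_mul_le_abs (ε (i+1)) (ε i)
    have b2 := sign_mul_le_abs (ε (i+1)) (ε (i+2))
    nlinarith [hd0]
  -- tsums
  have hSa_nonneg : 0 ≤ ∑' i, a i := tsum_nonneg ha_nonneg
  have htu : ∑' i, u i = r * ∑' i, a i := by
    rw [Summable.tsum_eq_zero_add hu_sum]
    have : u 0 = 0 := by simp [hu, h0]
    rw [this, zero_add]
    simp only [hu_shift]
    exact tsum_mul_left
  have htw : ∑' i, w i ≤ r * ∑' i, a i := by
    simp only [hw_eq]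
    rw [tsum_mul_left]
    apply mul_le_mul_of_nonneg_left _ (le_of_lt hr0)
    calc ∑' i, a (i + 1) ≤ a 0 + ∑' i, a (i + 1) := le_add_of_nonneg_left (ha_nonneg 0)
      _ = ∑' i, a i := (Summable.tsum_eq_zero_add ha_sum).symm
  have htg : ∑' i, g i ≤ -(r - 1)^2 * ∑' i, a i := by
    simp only [hg]
    rw [Summable.tsum_add (hu_sum.sub (ha_sum.mul_left _)) hw_sum,
        Summable.tsum_sub hu_sum (ha_sum.mul_left _), tsum_mul_left, htu]
    have : r * ∑' i, a i - ((d:ℝ)+1) * ∑' i, a i + r * ∑' i, a i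
        = (2*r - ((d:ℝ)+1)) * ∑' i, a i := by ring
    nlinarith [htw, hSa_nonneg, hrr]
  calc ∑' i, f i ≤ ∑' i, g i := Summable.tsum_le_tsum hfg hf_sum hg_sum
    _ ≤ -(r - 1)^2 * ∑' i, a i := htg
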